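/- Let H be a complex Hilbert space and π: 𝔻 → B(H) a map on the open unit disk 𝔻 ⊂ ℂ, given by a norm-convergent power series π(z) = ∑_{n≥0} zⁿ Pₙ with Pₙ ∈ B(H), and satisfying π(z̄) = π(z)* and π(zw) = π(z)π(w) for all z, w ∈ 𝔻. Then the coefficients satisfy Pₙ = Pₙ* = Pₙ², and Pₙ Pₘ = 0 whenever n ≠ m; in particular ‖π(z)‖ ≤ 1 for all z ∈ 𝔻. -/

import Mathlib

/-- Uniqueness of coefficients: if a power series sums to zero on the unit disk,
all coefficients vanish. -/
lemma coeff_unique_zero {E : Type*} [NormedAddCommGroup E] [NormedSpace ℂ E] {Q : ℕ → E}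
    (h : ∀ z : ℂ, ‖z‖ < 1 → HasSum (fun n : ℕ => z ^ n • Q n) 0) (n : ℕ) : Q n = 0 := by
  set p : FormalMultilinearSeries ℂ ℂ E :=
    fun n => ContinuousMultilinearMap.mkPiRing ℂ (Fin n) (Q n) with hpdef
  have hc : ∀ m, p.coeff m = Q m := by
    intro m
    simp [hpdef, FormalMultilinearSeries.coeff]
  have hp : HasFPowerSeriesAt (0 : ℂ → E) p 0 := by
    rw [hasFPowerSeriesAt_iff]
    filter_upwards [Metric.ball_mem_nhds (0 : ℂ) one_pos] with z hz
    have hz' : ‖z‖ < 1 := by simpa [Metric.mem_ball] using hz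
    simpa [hc] using h z hz'
  have hz : p = 0 := hp.eq_zero
  have : p.coeff n = 0 := by rw [hz]; simp [FormalMultilinearSeries.coeff]
  rw [← hc n, this]

lemma coeff_unique {E : Type*} [NormedAddCommGroup E] [NormedSpace ℂ E] {A B : ℕ → E}
    {f : ℂ → E}
    (hA : ∀ z : ℂ, ‖z‖ < 1 → HasSum (fun n : ℕ => z ^ n • A n) (f z))
    (hB : ∀ z : ℂ, ‖z‖ < 1 → HasSum (fun n : ℕ => z ^ n • B n) (f z)) (n : ℕ) : A n = B n := by
  have h : ∀ z : ℂ, ‖z‖ < 1 → HasSum (fun n : ℕ => z ^ n • (A n - B n)) 0 := by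
    intro z hz
    have := (hA z hz).sub (hB z hz)
    simpa [smul_sub] using this
  have := coeff_unique_zero h n
  exact sub_eq_zero.mp this

theorem coefficients_are_orthogonal_projections
    (H : Type*) [NormedAddCommGroup H] [InnerProductSpace ℂ H] [CompleteSpace H]
    (π : ℂ → (H →L[ℂ] H)) (P : ℕ → (H →L[ℂ] H))
    (hsum : ∀ z : ℂ, ‖z‖ < 1 → HasSum (fun n : ℕ => z ^ n • P n) (π z))
    (hstar : ∀ z : ℂ, ‖z‖ < 1 → π (starRingEnd ℂ z) = ContinuousLinearMap.adjoint (π z))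
    (hmul : ∀ z w : ℂ, ‖z‖ < 1 → ‖w‖ < 1 → π (z * w) = π z * π w) :
    (∀ n : ℕ, IsSelfAdjoint (P n) ∧ IsIdempotentElem (P n)) ∧
    (∀ n m : ℕ, n ≠ m → P n * P m = 0) ∧
    (∀ z : ℂ, ‖z‖ < 1 → ‖π z‖ ≤ 1) := by
  -- self-adjointness
  have hsa : ∀ n, IsSelfAdjoint (P n) := by
    intro n
    have h1 : ∀ z : ℂ, ‖z‖ < 1 → HasSum (fun n : ℕ => z ^ n • star (P n)) (π z) := by
      intro z hz
      have hz' : ‖starRingEnd ℂ z‖ < 1 := by simpa using hz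
      have := (hsum _ hz').star
      have heq : (fun n : ℕ => star ((starRingEnd ℂ z) ^ n • P n))
          = fun n : ℕ => z ^ n • star (P n) := by
        funext m
        rw [star_smul]
        congr 1
        simp
      rw [heq] at this
      have h2 : star (π (starRingEnd ℂ z)) = π z := by
        rw [hstar z hz, ← ContinuousLinearMap.star_eq_adjoint, star_star]
      rwa [h2] at this
    exact coeff_unique h1 hsum n
  -- key multiplicative identity
  have hkey : ∀ n m : ℕ, P n * P m = if m = n then P n else 0 := by
    have key1 : ∀ w : ℂ, ‖w‖ < 1 → ∀ n, w ^ n • P n = P n * π w := by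
      intro w hw
      have h1 : ∀ z : ℂ, ‖z‖ < 1 → HasSum (fun n : ℕ => z ^ n • (w ^ n • P n)) (π (z * w)) := by
        intro z hz
        have hzw : ‖z * w‖ < 1 := by
          rw [norm_mul]
          calc ‖z‖ * ‖w‖ ≤ ‖z‖ * 1 := by gcongr
          _ = ‖z‖ := mul_one _
          _ < 1 := hz
        have := hsum _ hzw
        have heq : (fun n : ℕ => (z * w) ^ n • P n)
            = fun n : ℕ => z ^ n • (w ^ n • P n) := by
          funext m; rw [mul_pow, mul_smul]
        rwa [heq] at this
      have h2 : ∀ z : ℂ, ‖z‖ < 1 → HasSum (fun n : ℕ => z ^ n • (P n * π w)) (π (z * w)) := by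
        intro z hz
        rw [hmul z w hz hw]
        have L : (H →L[ℂ] H) →L[ℂ] (H →L[ℂ] H) :=
          (ContinuousLinearMap.mul ℂ (H →L[ℂ] H)).flip (π w)
        have := ((ContinuousLinearMap.mul ℂ (H →L[ℂ] H)).flip (π w)).hasSum (hsum z hz)
        simpa using this
      exact fun n => coeff_unique h1 h2 n
    intro n m
    have h1 : ∀ w : ℂ, ‖w‖ < 1 →
        HasSum (fun m : ℕ => w ^ m • (P n * P m)) (P n * π w) := by
      intro w hw
      have := (ContinuousLinearMap.mul ℂ (H →L[ℂ] H) (P n)).hasSum (hsum w hw)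
      simpa using this
    have h2 : ∀ w : ℂ, ‖w‖ < 1 →
        HasSum (fun m : ℕ => w ^ m • (if m = n then P n else 0)) (P n * π w) := by
      intro w hw
      rw [← key1 w hw n]
      have heq : (fun m : ℕ => w ^ m • (if m = n then P n else 0))
          = fun m : ℕ => if m = n then w ^ n • P n else 0 := by
        funext m
        split <;> simp_all
      rw [heq]
      exact hasSum_ite_eq n _
    have := coeff_unique h1 h2 m
    simpa using this
  refine ⟨fun n => ⟨hsa n, (by simpa using hkey n n : P n * P n = P n)⟩,
    fun n m hnm => by simpa [Ne.symm hnm] using hkey n m, ?_⟩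
  -- norm bound
  -- first, a uniform bound near 0
  have hs2 := hsum (1/2 : ℂ) (by norm_num)
  obtain ⟨M, hM⟩ : ∃ M : ℝ, ∀ n : ℕ, ‖P n‖ ≤ M * 2 ^ n := by
    have htend : Filter.Tendsto (fun n : ℕ => ‖(1/2 : ℂ) ^ n • P n‖) Filter.atTop (nhds 0) := by
      simpa using (hs2.summable.tendsto_atTop_zero).norm
    obtain ⟨M, hM⟩ := htend.bddAbove_range
    refine ⟨M, fun n => ?_⟩
    have h1 : ‖(1/2 : ℂ) ^ n • P n‖ ≤ M := hM (Set.mem_range_self n)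
    have h2 : ‖(1/2 : ℂ) ^ n • P n‖ = (1/2 : ℝ) ^ n * ‖P n‖ := by
      rw [norm_smul, norm_pow]
      norm_num
    rw [h2] at h1
    have hp : (0:ℝ) < (1/2 : ℝ) ^ n := by positivity
    calc ‖P n‖ = ((1/2 : ℝ) ^ n * ‖P n‖) * 2 ^ n := by
          field_simp
          rw [mul_assoc, ← mul_pow]; norm_num
      _ ≤ M * 2 ^ n := by gcongr
  have hMnn : 0 ≤ M := le_trans (norm_nonneg (P 0)) (by simpa using hM 0)
  set C : ℝ := M * 2 with hC
  have hbound : ∀ s : ℂ, ‖s‖ ≤ 1/4 → ‖π s‖ ≤ C := by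
    intro s hs
    have hs1 : ‖s‖ < 1 := lt_of_le_of_lt hs (by norm_num)
    have hg : ∀ n : ℕ, ‖s ^ n • P n‖ ≤ M * (1/2 : ℝ) ^ n := by
      intro n
      rw [norm_smul, norm_pow]
      calc ‖s‖ ^ n * ‖P n‖ ≤ (1/4 : ℝ) ^ n * (M * 2 ^ n) :=
            mul_le_mul (pow_le_pow_left₀ (norm_nonneg s) hs n) (hM n) (norm_nonneg _)
              (by positivity)
        _ = M * (1/2 : ℝ) ^ n := by
            rw [mul_comm, mul_assoc]
            congr 1
            rw [← mul_pow]
            norm_num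
    have hgs : Summable (fun n : ℕ => M * (1/2 : ℝ) ^ n) :=
      (summable_geometric_of_lt_one (by norm_num) (by norm_num)).mul_left M
    have hsnorm : Summable (fun n : ℕ => ‖s ^ n • P n‖) :=
      Summable.of_nonneg_of_le (fun n => norm_nonneg _) hg hgs
    have := (hsum s hs1).tsum_eq
    rw [← this]
    calc ‖∑' n, s ^ n • P n‖ ≤ ∑' n, ‖s ^ n • P n‖ := norm_tsum_le_tsum_norm hsnorm
      _ ≤ ∑' n, M * (1/2 : ℝ) ^ n := Summable.tsum_le_tsum hg hsnorm hgs
      _ = M * 2 := by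
          rw [tsum_mul_left, tsum_geometric_of_lt_one (by norm_num) (by norm_num)]
          norm_num
      _ = C := hC.symm
  -- C*-identity for real arguments
  have hreal : ∀ r : ℝ, 0 ≤ r → r < 1 →
      ‖π (r : ℂ)‖ * ‖π (r : ℂ)‖ = ‖π ((r ^ 2 : ℝ) : ℂ)‖ := by
    intro r hr0 hr1
    have hrn : ‖(r : ℂ)‖ < 1 := by
      rw [Complex.norm_real, Real.norm_eq_abs]
      rwa [abs_of_nonneg hr0]
    have hself : star (π (r : ℂ)) = π (r : ℂ) := by
      rw [ContinuousLinearMap.star_eq_adjoint, ← hstar _ hrn, Complex.conj_ofReal]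
    calc ‖π (r : ℂ)‖ * ‖π (r : ℂ)‖ = ‖star (π (r : ℂ)) * π (r : ℂ)‖ :=
          (CStarRing.norm_star_mul_self).symm
      _ = ‖π ((r : ℂ) * (r : ℂ))‖ := by rw [hself, ← hmul _ _ hrn hrn]
      _ = ‖π ((r ^ 2 : ℝ) : ℂ)‖ := by push_cast; ring_nf
  have hiter : ∀ k : ℕ, ∀ r : ℝ, 0 ≤ r → r < 1 →
      ‖π (r : ℂ)‖ ^ (2 ^ k) = ‖π ((r ^ (2 ^ k) : ℝ) : ℂ)‖ := by
    intro k
    induction k with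
    | zero => intro r hr0 hr1; simp
    | succ k ih =>
      intro r hr0 hr1
      have h1 : (0:ℝ) ≤ r ^ (2 ^ k) := by positivity
      have h2 : r ^ (2 ^ k) < 1 := pow_lt_one₀ hr0 hr1 (by positivity)
      calc ‖π (r : ℂ)‖ ^ 2 ^ (k+1) = (‖π (r : ℂ)‖ ^ (2 ^ k)) ^ 2 := by
            rw [← pow_mul, pow_succ]
        _ = ‖π ((r ^ (2 ^ k) : ℝ) : ℂ)‖ ^ 2 := by rw [ih r hr0 hr1]
        _ = ‖π (((r ^ (2 ^ k)) ^ 2 : ℝ) : ℂ)‖ := by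
            rw [sq]; exact hreal _ h1 h2
        _ = ‖π ((r ^ (2 ^ (k+1)) : ℝ) : ℂ)‖ := by
            rw [← pow_mul, ← pow_succ]
  -- norm ≤ 1 for real arguments
  have hone : ∀ r : ℝ, 0 ≤ r → r < 1 → ‖π (r : ℂ)‖ ≤ 1 := by
    intro r hr0 hr1
    by_contra hcon
    push_neg at hcon
    -- choose N with r^n ≤ 1/4 for n ≥ N
    obtain ⟨N, hN⟩ : ∃ N : ℕ, ∀ n ≥ N, r ^ n ≤ 1/4 := by
      have : Filter.Tendsto (fun n : ℕ => r ^ n) Filter.atTop (nhds 0) :=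
        tendsto_pow_atTop_nhds_zero_of_lt_one hr0 hr1
      have := this.eventually (eventually_le_nhds (show (0:ℝ) < 1/4 by norm_num))
      exact Filter.eventually_atTop.mp this
    obtain ⟨m, hm⟩ := pow_unbounded_of_one_lt C hcon
    set k : ℕ := max N m with hk
    have h2k : k ≤ 2 ^ k := Nat.le_of_lt Nat.lt_two_pow_self
    have hNk : N ≤ 2 ^ k := le_trans (le_trans (le_max_left N m) h2k) (le_refl _)
    have hr4 : r ^ (2 ^ k) ≤ 1/4 := hN _ hNk
    have hnorm : ‖((r ^ (2 ^ k) : ℝ) : ℂ)‖ ≤ 1/4 := by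
      rw [Complex.norm_real, Real.norm_eq_abs, abs_of_nonneg (by positivity)]
      exact hr4
    have hb := hbound _ hnorm
    rw [← hiter k r hr0 hr1] at hb
    have hmk : m ≤ 2 ^ k := le_trans (le_trans (le_max_right N m) h2k) (le_refl _)
    have : C < ‖π (r : ℂ)‖ ^ (2 ^ k) :=
      lt_of_lt_of_le hm (pow_le_pow_right₀ hcon.le hmk)
    linarith
  -- conclude for all z
  intro z hz
  have hstarz : star (π z) = π (starRingEnd ℂ z) := by
    rw [hstar z hz, ContinuousLinearMap.star_eq_adjoint]
  have hzc : ‖starRingEnd ℂ z‖ < 1 := by simpa using hz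
  have hr0 : (0:ℝ) ≤ ‖z‖ ^ 2 := by positivity
  have hr1 : ‖z‖ ^ 2 < 1 := by
    calc ‖z‖ ^ 2 ≤ ‖z‖ * 1 := by rw [sq]; gcongr
    _ < 1 := by rwa [mul_one]
  have hmain : ‖π z‖ * ‖π z‖ = ‖π ((‖z‖ ^ 2 : ℝ) : ℂ)‖ := by
    calc ‖π z‖ * ‖π z‖ = ‖star (π z) * π z‖ := (CStarRing.norm_star_mul_self).symm
      _ = ‖π (starRingEnd ℂ z * z)‖ := by rw [hstarz, ← hmul _ _ hzc hz]
      _ = ‖π ((‖z‖ ^ 2 : ℝ) : ℂ)‖ := by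
          congr 2
          rw [Complex.conj_mul']
          simp [Complex.normSq_eq_norm_sq]
  have h1 := hone _ hr0 hr1
  nlinarith [norm_nonneg (π z), hmain]
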